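/- Let G be a finite simple connected graph and let x ≠ y be vertices of G. As α tends to 1 from the left, the quotient κ_α(x,y)/(1−α) converges to inf { (Δf(x) − Δf(y)) / d(x,y) : f : V(G) → ℝ is 1-Lipschitz and f(y) − f(x) = d(x,y) }, where Δf(x) = (1/deg(x)) · ∑_{z adjacent to x} (f(z) − f(x)). -/

import Mathlib

open Finset

noncomputable section

/-- The (normalized) graph Laplacian `Δf(x) = (1/deg x) ∑_{y ~ x} (f y - f x)`. -/
def graphLap {V : Type*} [Fintype V] (G : SimpleGraph V) [DecidableRel G.Adj]
    (f : V → ℝ) (x : V) : ℝ :=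
  (G.degree x : ℝ)⁻¹ * ∑ y ∈ G.neighborFinset x, (f y - f x)

/-- `f` is 1-Lipschitz with respect to the graph distance. -/
def IsLip1 {V : Type*} (G : SimpleGraph V) (f : V → ℝ) : Prop :=
  ∀ u v : V, |f u - f v| ≤ G.dist u v

/-- Lin–Lu–Yau curvature of a pair of vertices, via the limit-free
(Münch–Wojciechowski) formulation. -/
def kappaLLY {V : Type*} [Fintype V] (G : SimpleGraph V) [DecidableRel G.Adj]
    (x y : V) : ℝ :=
  sInf { r : ℝ | ∃ f : V → ℝ, IsLip1 G f ∧ f y - f x = G.dist x y ∧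
      r = (graphLap G f x - graphLap G f y) / G.dist x y }

/-- `G` contains a cycle of length `n` as a subgraph: `n` distinct vertices
arranged cyclically so that consecutive ones are adjacent. -/
def HasCycleLen {V : Type*} (G : SimpleGraph V) (n : ℕ) [NeZero n] : Prop :=
  ∃ c : Fin n → V, Function.Injective c ∧ ∀ i : Fin n, G.Adj (c i) (c (i + 1))

/-- `m` is a probability distribution on the (finite) vertex set. -/
def IsProb {V : Type*} [Fintype V] (m : V → ℝ) : Prop :=
  (∀ x, 0 ≤ m x ∧ m x ≤ 1) ∧ ∑ x, m x = 1

/-- `A` is a coupling between the distributions `m1` and `m2`. -/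
def IsCoupling {V : Type*} [Fintype V] (m1 m2 : V → ℝ) (A : V → V → ℝ) : Prop :=
  (∀ x y, 0 ≤ A x y ∧ A x y ≤ 1) ∧ (∀ x, ∑ y, A x y = m1 x) ∧
    (∀ y, ∑ x, A x y = m2 y)

/-- The transportation distance between two distributions on the vertices of `G`. -/
def transportDist {V : Type*} [Fintype V] (G : SimpleGraph V) (m1 m2 : V → ℝ) : ℝ :=
  sInf { r : ℝ | ∃ A : V → V → ℝ, IsCoupling m1 m2 A ∧
      r = ∑ x, ∑ y, A x y * G.dist x y }

/-- The `α`-lazy random walk distribution at the vertex `x`. -/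
def lazyWalk {V : Type*} [Fintype V] [DecidableEq V] (G : SimpleGraph V)
    [DecidableRel G.Adj] (α : ℝ) (x : V) : V → ℝ :=
  fun v => if v = x then α else if G.Adj x v then (1 - α) / G.degree x else 0

/-- The `α`-Ricci curvature `κ_α(x,y) = 1 - W(m_x^α, m_y^α)/d(x,y)`. -/
def kappaAlpha {V : Type*} [Fintype V] [DecidableEq V] (G : SimpleGraph V)
    [DecidableRel G.Adj] (α : ℝ) (x y : V) : ℝ :=
  1 - transportDist G (lazyWalk G α x) (lazyWalk G α y) / G.dist x y

set_option linter.unusedSectionVars false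

section Aux
variable {V : Type*} [Fintype V] [DecidableEq V] {G : SimpleGraph V} [DecidableRel G.Adj]

lemma degree_pos (hconn : G.Connected) [Nontrivial V] (v : V) : 0 < G.degree v := by
  obtain ⟨w, hw⟩ := exists_ne v
  obtain ⟨p⟩ := hconn.preconnected v w
  rw [G.degree_pos_iff_exists_adj]
  cases p with
  | nil => exact absurd rfl hw.symm.elim
  | cons h p => exact ⟨_, h⟩

lemma sum_mul_lazyWalk (α : ℝ) (x : V) (g : V → ℝ) :
    ∑ v, g v * lazyWalk G α x v
      = α * g x + ((1 - α) / G.degree x) * ∑ z ∈ G.neighborFinset x, g z := by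
  have key : ∀ v, g v * lazyWalk G α x v
      = (if v = x then α * g v else 0)
        + (if v ∈ G.neighborFinset x then ((1 - α) / G.degree x) * g v else 0) := by
    intro v
    unfold lazyWalk
    by_cases h1 : v = x
    · subst h1
      simp [G.notMem_neighborFinset_self, mul_comm]
    · by_cases h2 : G.Adj x v
      · simp [h1, h2, G.mem_neighborFinset, mul_comm]
      · simp [h1, h2, G.mem_neighborFinset]
  rw [Finset.sum_congr rfl (fun v _ => key v), Finset.sum_add_distrib]
  congr 1
  · simp
  · rw [Finset.sum_ite_mem, Finset.univ_inter, Finset.mul_sum]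

lemma sum_mul_lazyWalk_eq_lap (hconn : G.Connected) [Nontrivial V] (α : ℝ) (x : V) (g : V → ℝ) :
    ∑ v, g v * lazyWalk G α x v = g x + (1 - α) * graphLap G g x := by
  have hdeg : (G.degree x : ℝ) ≠ 0 := by
    exact_mod_cast (degree_pos hconn x).ne'
  rw [sum_mul_lazyWalk, graphLap, Finset.sum_sub_distrib, Finset.sum_const,
    G.card_neighborFinset_eq_degree, nsmul_eq_mul]
  field_simp
  ring

lemma isProb_lazyWalk (hconn : G.Connected) [Nontrivial V] {α : ℝ} (hα : 0 ≤ α) (hα1 : α ≤ 1)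
    (x : V) : IsProb (lazyWalk G α x) := by
  have hdeg : (0:ℝ) < G.degree x := by exact_mod_cast degree_pos hconn x
  have hdeg1 : (1:ℝ) ≤ G.degree x := by exact_mod_cast degree_pos hconn x
  constructor
  · intro v
    unfold lazyWalk
    split_ifs with h1 h2
    · exact ⟨hα, hα1⟩
    · constructor
      · exact div_nonneg (by linarith) hdeg.le
      · rw [div_le_one hdeg]; linarith
    · norm_num
  · have := sum_mul_lazyWalk (G := G) α x (fun _ => 1)
    simp only [one_mul] at this
    rw [this]
    simp only [Finset.sum_const, G.card_neighborFinset_eq_degree, nsmul_eq_mul, mul_one]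
    field_simp
    ring

end Aux

section Dual
variable {V : Type*} [Fintype V] [DecidableEq V] {G : SimpleGraph V} [DecidableRel G.Adj]

lemma lip_dist_fun (hconn : G.Connected) (x : V) :
    IsLip1 G (fun v => (G.dist x v : ℝ)) := by
  intro u v
  rw [abs_sub_le_iff]
  constructor
  · have h := hconn.dist_triangle (u := x) (v := v) (w := u)
    have h2 : G.dist v u = G.dist u v := G.dist_comm
    push_cast
    have : (G.dist x u : ℝ) ≤ G.dist x v + G.dist v u := by exact_mod_cast h
    rw [h2] at this; linarith
  · have h := hconn.dist_triangle (u := x) (v := u) (w := v)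
    have : (G.dist x v : ℝ) ≤ G.dist x u + G.dist u v := by exact_mod_cast h
    linarith

lemma lip_le_dist {f : V → ℝ} (hf : IsLip1 G f) (u v : V) : f v - f u ≤ G.dist u v := by
  have h := hf u v
  rw [abs_sub_le_iff] at h
  exact h.2

lemma abs_graphLap_le (hconn : G.Connected) [Nontrivial V] {f : V → ℝ} (hf : IsLip1 G f)
    (x : V) : |graphLap G f x| ≤ 1 := by
  have hdeg : (0:ℝ) < G.degree x := by exact_mod_cast degree_pos hconn x
  unfold graphLap
  rw [abs_mul, abs_inv, Nat.abs_cast]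
  have hb : |∑ z ∈ G.neighborFinset x, (f z - f x)| ≤ G.degree x := by
    refine (Finset.abs_sum_le_sum_abs _ _).trans ?_
    rw [← G.card_neighborFinset_eq_degree]
    push_cast
    refine (Finset.sum_le_card_nsmul _ _ 1 ?_).trans_eq (by simp)
    intro z hz
    have hadj : G.Adj x z := (G.mem_neighborFinset x z).mp hz
    have h1 : G.dist z x = 1 := by rw [SimpleGraph.dist_comm]; exact SimpleGraph.dist_eq_one_iff_adj.mpr hadj
    have h2 := hf z x
    rw [h1] at h2
    simpa using h2
  calc (G.degree x : ℝ)⁻¹ * |∑ z ∈ G.neighborFinset x, (f z - f x)|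
      ≤ (G.degree x : ℝ)⁻¹ * G.degree x := by
        exact mul_le_mul_of_nonneg_left hb (inv_nonneg.mpr hdeg.le)
    _ = 1 := inv_mul_cancel₀ hdeg.ne'

lemma weak_duality {m1 m2 : V → ℝ} {A : V → V → ℝ} (hA : IsCoupling m1 m2 A)
    {f : V → ℝ} (hf : IsLip1 G f) :
    ∑ v, f v * m2 v - ∑ v, f v * m1 v ≤ ∑ u, ∑ v, A u v * G.dist u v := by
  obtain ⟨hpos, hrow, hcol⟩ := hA
  have h2 : ∑ v, f v * m2 v = ∑ u, ∑ v, A u v * f v := by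
    rw [Finset.sum_comm]
    refine Finset.sum_congr rfl fun v _ => ?_
    rw [← hcol v, Finset.mul_sum]
    exact Finset.sum_congr rfl fun u _ => mul_comm _ _
  have h1 : ∑ u, f u * m1 u = ∑ u, ∑ v, A u v * f u := by
    refine Finset.sum_congr rfl fun u _ => ?_
    rw [← hrow u, Finset.mul_sum]
    exact Finset.sum_congr rfl fun v _ => mul_comm _ _
  rw [h2, h1, ← Finset.sum_sub_distrib]
  refine Finset.sum_le_sum fun u _ => ?_
  rw [← Finset.sum_sub_distrib]
  refine Finset.sum_le_sum fun v _ => ?_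
  rw [← mul_sub]
  exact mul_le_mul_of_nonneg_left (lip_le_dist hf u v) (hpos u v).1

lemma couplingCost_nonneg {m1 m2 : V → ℝ} {A : V → V → ℝ} (hA : IsCoupling m1 m2 A) :
    0 ≤ ∑ u, ∑ v, A u v * (G.dist u v : ℝ) :=
  Finset.sum_nonneg fun u _ => Finset.sum_nonneg fun v _ =>
    mul_nonneg (hA.1 u v).1 (Nat.cast_nonneg _)

lemma isCoupling_prod {m1 m2 : V → ℝ} (h1 : IsProb m1) (h2 : IsProb m2) :
    IsCoupling m1 m2 (fun u v => m1 u * m2 v) := by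
  refine ⟨fun u v => ⟨mul_nonneg (h1.1 u).1 (h2.1 v).1, ?_⟩, fun u => ?_, fun v => ?_⟩
  · exact mul_le_one₀ (h1.1 u).2 (h2.1 v).1 (h2.1 v).2
  · rw [← Finset.mul_sum, h2.2, mul_one]
  · rw [← Finset.sum_mul, h1.2, one_mul]

lemma transportDist_le_cost {m1 m2 : V → ℝ} {A : V → V → ℝ} (hA : IsCoupling m1 m2 A) :
    transportDist G m1 m2 ≤ ∑ u, ∑ v, A u v * G.dist u v := by
  refine csInf_le ⟨0, ?_⟩ ⟨A, hA, rfl⟩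
  rintro r ⟨B, hB, rfl⟩
  exact couplingCost_nonneg hB

lemma le_transportDist {m1 m2 : V → ℝ} (h1 : IsProb m1) (h2 : IsProb m2)
    {f : V → ℝ} (hf : IsLip1 G f) :
    ∑ v, f v * m2 v - ∑ v, f v * m1 v ≤ transportDist G m1 m2 := by
  refine le_csInf ⟨_, ⟨_, isCoupling_prod h1 h2, rfl⟩⟩ ?_
  rintro r ⟨A, hA, rfl⟩
  exact weak_duality hA hf

end Dual
section StrongTest
variable {V : Type*} [Fintype V] [DecidableEq V] (G : SimpleGraph V) [DecidableRel G.Adj]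

/-- The marginal/cost map for the transport LP. -/
def Tmap : ((V × V → ℝ) × ℝ) →ₗ[ℝ] ((V → ℝ) × (V → ℝ) × ℝ) where
  toFun q := (fun u => ∑ v, q.1 (u, v), fun v => ∑ u, q.1 (u, v),
      (∑ p : V × V, q.1 p * (G.dist p.1 p.2 : ℝ)) + q.2)
  map_add' q q' := by
    refine Prod.ext ?_ (Prod.ext ?_ ?_)
    · funext u; simp [Finset.sum_add_distrib]
    · funext v; simp [Finset.sum_add_distrib]
    · simp [Finset.sum_add_distrib, add_mul]; ring
  map_smul' c q := by
    refine Prod.ext ?_ (Prod.ext ?_ ?_)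
    · funext u; simp [Finset.mul_sum]
    · funext v; simp [Finset.mul_sum]
    · simp [Finset.mul_sum, mul_add, mul_assoc]

def posQ : Set ((V × V → ℝ) × ℝ) := {q | (∀ p, 0 ≤ q.1 p) ∧ 0 ≤ q.2}

lemma convex_posQ : Convex ℝ (posQ (V := V)) := by
  intro q hq q' hq' a b ha hb _
  exact ⟨fun p => add_nonneg (mul_nonneg ha (hq.1 p)) (mul_nonneg hb (hq'.1 p)),
    add_nonneg (mul_nonneg ha hq.2) (mul_nonneg hb hq'.2)⟩

def K0 : Set ((V → ℝ) × (V → ℝ) × ℝ) := Tmap G '' posQ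

def sigmaF : ((V → ℝ) × (V → ℝ) × ℝ) → ℝ := fun w => (∑ u, w.1 u) + w.2.2

lemma sigmaF_cont : Continuous (sigmaF (V := V)) := by
  unfold sigmaF
  fun_prop

lemma sigma_T_ge {q : (V × V → ℝ) × ℝ} (hq : q ∈ posQ) :
    (∑ p : V × V, q.1 p) + q.2 ≤ sigmaF (Tmap G q) := by
  unfold sigmaF Tmap
  simp only [LinearMap.coe_mk, AddHom.coe_mk]
  rw [← Fintype.sum_prod_type]
  have : (0:ℝ) ≤ ∑ p : V × V, q.1 p * (G.dist p.1 p.2 : ℝ) :=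
    Finset.sum_nonneg fun p _ => mul_nonneg (hq.1 p) (Nat.cast_nonneg _)
  linarith

lemma isClosed_K0 : IsClosed (K0 G) := by
  refine isClosed_of_closure_subset ?_
  intro z hz
  set M : ℝ := sigmaF z + 1 with hM
  set U : Set ((V → ℝ) × (V → ℝ) × ℝ) := {w | sigmaF w < M} with hUdef
  have hU : IsOpen U := isOpen_lt (sigmaF_cont) continuous_const
  have hzU : z ∈ U := by simp [hUdef, hM]
  have h1 : z ∈ closure (K0 G ∩ U) := by
    rw [mem_closure_iff_nhds] at hz ⊢
    intro t ht
    obtain ⟨w, hw1, hw2⟩ := hz (t ∩ U) (Filter.inter_mem ht (hU.mem_nhds hzU))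
    exact ⟨w, hw1.1, hw2, hw1.2⟩
  set c : (V × V → ℝ) × ℝ := (fun _ => M, M) with hc
  have hbox : IsCompact (Set.Icc (0 : (V × V → ℝ) × ℝ) c) := isCompact_Icc
  have hTc : Continuous (Tmap G) := (Tmap G).continuous_of_finiteDimensional
  have hC : IsCompact (Tmap G '' Set.Icc 0 c) := hbox.image hTc
  have hsub : K0 G ∩ U ⊆ Tmap G '' Set.Icc 0 c := by
    rintro w ⟨⟨q, hq, rfl⟩, hwU⟩
    refine ⟨q, ?_, rfl⟩
    have hσ : (∑ p : V × V, q.1 p) + q.2 ≤ M := (sigma_T_ge G hq).trans (le_of_lt hwU)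
    have hsum_nonneg : (0:ℝ) ≤ ∑ p : V × V, q.1 p := Finset.sum_nonneg fun p _ => hq.1 p
    constructor
    · rw [Prod.le_def]
      exact ⟨hq.1, hq.2⟩
    · rw [Prod.le_def, hc]
      constructor
      · intro p
        have := Finset.single_le_sum (f := q.1) (fun i _ => hq.1 i) (Finset.mem_univ p)
        simpa using le_trans this (by linarith [hq.2])
      · simpa using by linarith [hq.2]
  have h2 : z ∈ Tmap G '' Set.Icc 0 c :=
    (hC.isClosed.closure_eq ▸ closure_mono hsub h1)
  obtain ⟨q, hq, rfl⟩ := h2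
  refine ⟨q, ?_, rfl⟩
  rw [Set.mem_Icc, Prod.le_def] at hq
  exact ⟨fun p => hq.1.1 p, hq.1.2⟩

end StrongTest

section Strong2
variable {V : Type*} [Fintype V] [DecidableEq V] {G : SimpleGraph V} [DecidableRel G.Adj]

lemma strong_duality (hconn : G.Connected) [Nontrivial V] {m1 m2 : V → ℝ}
    (h1 : IsProb m1) (h2 : IsProb m2) {ε : ℝ} (hε : 0 < ε) :
    ∃ F : V → ℝ, IsLip1 G F ∧
      transportDist G m1 m2 - ε < ∑ v, F v * m2 v - ∑ v, F v * m1 v := by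
  classical
  set W := transportDist G m1 m2 with hW
  set z : (V → ℝ) × (V → ℝ) × ℝ := (m1, m2, W - ε) with hz
  -- z is not in the cone K0
  have hznot : z ∉ K0 G := by
    rintro ⟨q, hq, hTq⟩
    set A : V → V → ℝ := fun u v => q.1 (u, v) with hA
    have hrow : ∀ u, ∑ v, A u v = m1 u := by
      intro u
      have := congrArg Prod.fst hTq
      exact congrFun this u
    have hcol : ∀ v, ∑ u, A u v = m2 v := by
      intro v
      have := congrArg (fun w => w.2.1) hTq
      exact congrFun this v
    have hcost : (∑ p : V × V, q.1 p * (G.dist p.1 p.2 : ℝ)) + q.2 = W - ε :=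
      congrArg (fun w => w.2.2) hTq
    have hcoupling : IsCoupling m1 m2 A := by
      refine ⟨fun u v => ⟨hq.1 (u, v), ?_⟩, hrow, hcol⟩
      · have hle1 : A u v ≤ ∑ v', A u v' :=
          Finset.single_le_sum (f := fun v' => A u v') (fun i _ => hq.1 (u, i))
            (Finset.mem_univ v)
        calc A u v ≤ ∑ v', A u v' := hle1
          _ = m1 u := hrow u
          _ ≤ 1 := (h1.1 u).2
    have hle : W ≤ ∑ u, ∑ v, A u v * (G.dist u v : ℝ) := transportDist_le_cost hcoupling
    have : ∑ u, ∑ v, A u v * (G.dist u v : ℝ) = ∑ p : V × V, q.1 p * (G.dist p.1 p.2 : ℝ) :=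
      (Fintype.sum_prod_type (f := fun p : V × V => q.1 p * (G.dist p.1 p.2 : ℝ))).symm
    rw [this] at hle
    have := hq.2
    linarith
  -- separate
  obtain ⟨f, u, hfK, hfz⟩ :=
    geometric_hahn_banach_closed_point (s := K0 G)
      ((convex_posQ).linear_image (Tmap G)) (isClosed_K0 G) hznot
  have h0K : (0 : (V → ℝ) × (V → ℝ) × ℝ) ∈ K0 G := by
    refine ⟨0, ⟨fun p => le_refl 0, le_refl 0⟩, ?_⟩
    simp
  have hu0 : 0 < u := by simpa using hfK 0 h0K
  have hfle : ∀ b ∈ K0 G, f b ≤ 0 := by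
    intro b hb
    by_contra hpos
    push_neg at hpos
    obtain ⟨q, hq, rfl⟩ := hb
    have hmem : ((u + 1) / f ((Tmap G) q)) • (Tmap G) q ∈ K0 G := by
      refine ⟨((u + 1) / f ((Tmap G) q)) • q, ?_, (Tmap G).map_smul _ q⟩
      have ht0 : 0 ≤ (u + 1) / f ((Tmap G) q) := by positivity
      exact ⟨fun p => mul_nonneg ht0 (hq.1 p), mul_nonneg ht0 hq.2⟩
    have := hfK _ hmem
    rw [map_smul, smul_eq_mul, div_mul_cancel₀ _ (ne_of_gt hpos)] at this
    linarith
  -- components of f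
  set φ : V → ℝ := fun u₀ => f (Pi.single u₀ 1, 0, 0) with hφ
  set ψ : V → ℝ := fun v₀ => f (0, Pi.single v₀ 1, 0) with hψ
  set τ : ℝ := f (0, 0, 1) with hτ
  -- generators
  have hgen : ∀ u₀ v₀ : V, φ u₀ + ψ v₀ + (G.dist u₀ v₀ : ℝ) * τ ≤ 0 := by
    intro u₀ v₀
    have hmem : ((Pi.single u₀ 1 : V → ℝ), (Pi.single v₀ 1 : V → ℝ), (G.dist u₀ v₀ : ℝ)) ∈ K0 G := by
      refine ⟨(fun p => if p = (u₀, v₀) then 1 else 0, 0), ⟨fun p => by positivity, le_refl 0⟩, ?_⟩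
      unfold Tmap
      refine Prod.ext ?_ (Prod.ext ?_ ?_)
      · funext u'
        by_cases h : u' = u₀ <;>
          simp [Prod.ext_iff, Pi.single_apply, Finset.sum_ite_eq', Finset.filter_eq', h]
      · funext v'
        by_cases h : v' = v₀ <;>
          simp [Prod.ext_iff, Pi.single_apply, Finset.sum_ite_eq', Finset.filter_eq', h]
      · simp [ite_mul, Finset.sum_ite_eq']
    have hdecomp : ((Pi.single u₀ 1 : V → ℝ), (Pi.single v₀ 1 : V → ℝ), (G.dist u₀ v₀ : ℝ))
        = ((Pi.single u₀ 1 : V → ℝ), 0, 0) + ((0 : V → ℝ), (Pi.single v₀ 1 : V → ℝ), (0:ℝ))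
          + (G.dist u₀ v₀ : ℝ) • ((0 : V → ℝ), (0 : V → ℝ), (1:ℝ)) := by
      simp [Prod.mk_add_mk, Prod.smul_mk]
    have := hfle _ hmem
    rw [hdecomp, map_add, map_add, map_smul, smul_eq_mul] at this
    exact this
  have hτ0 : τ ≤ 0 := by
    refine hfle (0, 0, 1) ?_
    refine ⟨(0, 1), ⟨fun p => le_refl 0, zero_le_one⟩, ?_⟩
    unfold Tmap
    refine Prod.ext ?_ (Prod.ext ?_ ?_)
    · funext w; simp
    · funext w; simp
    · simp
  -- value at z
  have hfzval : f z = ∑ u₀, m1 u₀ * φ u₀ + ∑ v₀, m2 v₀ * ψ v₀ + (W - ε) * τ := by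
    have e1 : ((m1, 0, 0) : (V → ℝ) × (V → ℝ) × ℝ)
        = ∑ u₀, m1 u₀ • ((Pi.single u₀ 1 : V → ℝ), (0 : V → ℝ), (0:ℝ)) := by
      refine Prod.ext ?_ (Prod.ext ?_ ?_)
      · rw [Prod.fst_sum]
        simp only [Prod.smul_fst]
        funext j
        rw [Finset.sum_apply]
        simp [Pi.single_apply]
      · rw [Prod.snd_sum, Prod.fst_sum]
        simp
      · rw [Prod.snd_sum, Prod.snd_sum]
        simp
    have e2 : ((0, m2, 0) : (V → ℝ) × (V → ℝ) × ℝ)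
        = ∑ v₀, m2 v₀ • ((0 : V → ℝ), (Pi.single v₀ 1 : V → ℝ), (0:ℝ)) := by
      refine Prod.ext ?_ (Prod.ext ?_ ?_)
      · rw [Prod.fst_sum]
        simp
      · rw [Prod.snd_sum, Prod.fst_sum]
        simp only [Prod.smul_snd, Prod.smul_fst]
        funext j
        rw [Finset.sum_apply]
        simp [Pi.single_apply]
      · rw [Prod.snd_sum, Prod.snd_sum]
        simp
    have e3 : ((0, 0, W - ε) : (V → ℝ) × (V → ℝ) × ℝ)
        = (W - ε) • ((0 : V → ℝ), (0 : V → ℝ), (1:ℝ)) := by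
      refine Prod.ext ?_ (Prod.ext ?_ ?_) <;> simp
    have hz3 : z = (m1, 0, 0) + (0, m2, 0) + (0, 0, W - ε) := by
      refine Prod.ext ?_ (Prod.ext ?_ ?_) <;> simp [hz]
    rw [hz3, map_add, map_add, e1, e2, e3, map_sum, map_sum, map_smul, smul_eq_mul]
    congr 1
    congr 1
    · exact Finset.sum_congr rfl fun u₀ _ => by rw [map_smul, smul_eq_mul]
    · exact Finset.sum_congr rfl fun v₀ _ => by rw [map_smul, smul_eq_mul]
  have hfzpos : 0 < f z := lt_trans hu0 hfz
  -- τ < 0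
  have hτneg : τ < 0 := by
    rcases lt_or_eq_of_le hτ0 with h | h
    · exact h
    · exfalso
      have hsum : ∑ u₀, m1 u₀ * φ u₀ + ∑ v₀, m2 v₀ * ψ v₀ ≤ 0 := by
        have key : ∑ u₀, m1 u₀ * φ u₀ + ∑ v₀, m2 v₀ * ψ v₀
            = ∑ u₀, ∑ v₀, (m1 u₀ * m2 v₀) * (φ u₀ + ψ v₀) := by
          have e1 : ∑ u₀, m1 u₀ * φ u₀ = ∑ u₀, ∑ v₀, (m1 u₀ * m2 v₀) * φ u₀ := by
            refine Finset.sum_congr rfl fun u₀ _ => ?_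
            rw [← Finset.sum_mul]
            rw [show ∑ v₀, m1 u₀ * m2 v₀ = m1 u₀ by rw [← Finset.mul_sum, h2.2, mul_one]]
          have e2 : ∑ v₀, m2 v₀ * ψ v₀ = ∑ u₀, ∑ v₀, (m1 u₀ * m2 v₀) * ψ v₀ := by
            rw [Finset.sum_comm]
            refine Finset.sum_congr rfl fun v₀ _ => ?_
            rw [← Finset.sum_mul]
            rw [show ∑ u₀, m1 u₀ * m2 v₀ = m2 v₀ by rw [← Finset.sum_mul, h1.2, one_mul]]
          rw [e1, e2, ← Finset.sum_add_distrib]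
          refine Finset.sum_congr rfl fun u₀ _ => ?_
          rw [← Finset.sum_add_distrib]
          exact Finset.sum_congr rfl fun v₀ _ => by ring
        rw [key]
        refine Finset.sum_nonpos fun u₀ _ => Finset.sum_nonpos fun v₀ _ => ?_
        refine mul_nonpos_of_nonneg_of_nonpos (mul_nonneg (h1.1 u₀).1 (h2.1 v₀).1) ?_
        have hg := hgen u₀ v₀
        rw [h] at hg
        simpa using hg
      rw [hfzval, h] at hfzpos
      simp at hfzpos
      linarith
  -- scaled dual variables
  set θ : ℝ := -τ with hθ
  have hθpos : 0 < θ := by simpa [hθ] using hτneg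
  set φ' : V → ℝ := fun u₀ => φ u₀ / θ with hφ'
  set ψ' : V → ℝ := fun v₀ => ψ v₀ / θ with hψ'
  have hφψ : ∀ u₀ v₀, φ' u₀ + ψ' v₀ ≤ (G.dist u₀ v₀ : ℝ) := by
    intro u₀ v₀
    rw [hφ', hψ', ← add_div, div_le_iff₀ hθpos]
    have := hgen u₀ v₀
    have : φ u₀ + ψ v₀ ≤ (G.dist u₀ v₀ : ℝ) * θ := by
      rw [hθ]; nlinarith [hgen u₀ v₀]
    linarith
  have hval : W - ε < ∑ u₀, m1 u₀ * φ' u₀ + ∑ v₀, m2 v₀ * ψ' v₀ := by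
    have hsum' : ∑ u₀, m1 u₀ * φ' u₀ + ∑ v₀, m2 v₀ * ψ' v₀
        = (∑ u₀, m1 u₀ * φ u₀ + ∑ v₀, m2 v₀ * ψ v₀) / θ := by
      rw [add_div, Finset.sum_div, Finset.sum_div]
      congr 1
      · exact Finset.sum_congr rfl fun w _ => by rw [hφ']; ring
      · exact Finset.sum_congr rfl fun w _ => by rw [hψ']; ring
    rw [hsum', lt_div_iff₀ hθpos]
    have hτθ : τ = -θ := by rw [hθ]; ring
    rw [hfzval, hτθ] at hfzpos
    linarith
  have hne : (Finset.univ : Finset V).Nonempty := Finset.univ_nonempty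
  set F : V → ℝ := fun v => Finset.univ.inf' hne (fun u₀ => (G.dist u₀ v : ℝ) - φ' u₀) with hF
  have hF1 : ∀ v, ψ' v ≤ F v := by
    intro v
    refine Finset.le_inf' hne _ fun u₀ _ => ?_
    have := hφψ u₀ v
    linarith
  have hF2 : ∀ u₀, F u₀ ≤ -φ' u₀ := by
    intro u₀
    have h2 : Finset.univ.inf' hne (fun w => (G.dist w u₀ : ℝ) - φ' w)
        ≤ (G.dist u₀ u₀ : ℝ) - φ' u₀ :=
      Finset.inf'_le _ (Finset.mem_univ u₀)
    rw [SimpleGraph.dist_self] at h2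
    rw [Nat.cast_zero, zero_sub] at h2
    exact h2
  have hFkey : ∀ a b : V, F a - F b ≤ (G.dist a b : ℝ) := by
    intro a b
    obtain ⟨u₀, _, hu₀⟩ := Finset.exists_mem_eq_inf' hne (fun w => (G.dist w b : ℝ) - φ' w)
    have hle : F a ≤ (G.dist u₀ a : ℝ) - φ' u₀ :=
      Finset.inf'_le _ (Finset.mem_univ u₀)
    have htri : G.dist u₀ a ≤ G.dist u₀ b + G.dist b a :=
      hconn.dist_triangle (u := u₀) (v := b) (w := a)
    have htri' : (G.dist u₀ a : ℝ) ≤ (G.dist u₀ b : ℝ) + (G.dist a b : ℝ) := by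
      have h2 : G.dist b a = G.dist a b := SimpleGraph.dist_comm
      rw [h2] at htri
      exact_mod_cast htri
    have hFb : F b = (G.dist u₀ b : ℝ) - φ' u₀ := hu₀
    linarith
  have hFlip : IsLip1 G F := by
    intro a b
    rw [abs_sub_le_iff]
    refine ⟨hFkey a b, ?_⟩
    have := hFkey b a
    have h2 : (G.dist b a : ℝ) = (G.dist a b : ℝ) := by
      exact_mod_cast congrArg (Nat.cast : ℕ → ℝ) (SimpleGraph.dist_comm (u := b) (v := a))
    linarith
  refine ⟨F, hFlip, ?_⟩
  have hA : ∑ u₀, m1 u₀ * φ' u₀ ≤ ∑ u₀, m1 u₀ * (-F u₀) :=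
    Finset.sum_le_sum fun u₀ _ =>
      mul_le_mul_of_nonneg_left (by linarith [hF2 u₀]) (h1.1 u₀).1
  have hB : ∑ v₀, m2 v₀ * ψ' v₀ ≤ ∑ v₀, m2 v₀ * F v₀ :=
    Finset.sum_le_sum fun v₀ _ => mul_le_mul_of_nonneg_left (hF1 v₀) (h2.1 v₀).1
  have e1 : ∑ v₀, m2 v₀ * F v₀ = ∑ v, F v * m2 v :=
    Finset.sum_congr rfl fun _ _ => mul_comm _ _
  have e2 : ∑ u₀, m1 u₀ * (-F u₀) = -∑ v, F v * m1 v := by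
    rw [← Finset.sum_neg_distrib]
    exact Finset.sum_congr rfl fun _ _ => by ring
  linarith [hval]

end Strong2

section Main
variable {V : Type*} [Fintype V] [DecidableEq V] {G : SimpleGraph V} [DecidableRel G.Adj]

lemma graphLap_sub_const (f : V → ℝ) (c : ℝ) (w : V) :
    graphLap G (fun v => f v - c) w = graphLap G f w := by
  unfold graphLap
  congr 1
  exact Finset.sum_congr rfl fun z _ => by ring

lemma isLip1_sub_const {f : V → ℝ} (hf : IsLip1 G f) (c : ℝ) :
    IsLip1 G (fun v => f v - c) := by
  intro u v
  simpa [sub_sub_sub_cancel_right] using hf u v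

lemma continuous_lapdiff (x y : V) :
    Continuous (fun g : V → ℝ => graphLap G g y - graphLap G g x) := by
  have h : ∀ w : V, Continuous (fun g : V → ℝ => graphLap G g w) := by
    intro w
    unfold graphLap
    refine continuous_const.mul ?_
    exact continuous_finset_sum _ fun z _ => (continuous_apply z).sub (continuous_apply w)
  exact (h y).sub (h x)

lemma isCompact_K0L (x : V) :
    IsCompact {g : V → ℝ | g x = 0 ∧ IsLip1 G g} := by
  set D : ℝ := ∑ u, (G.dist u x : ℝ) with hD
  have hD0 : 0 ≤ D := Finset.sum_nonneg fun u _ => Nat.cast_nonneg _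
  refine Metric.isCompact_of_isClosed_isBounded ?_ ?_
  · refine IsClosed.inter ?_ ?_
    · exact isClosed_eq (continuous_apply x) continuous_const
    · show IsClosed {g : V → ℝ | IsLip1 G g}
      have : {g : V → ℝ | IsLip1 G g}
          = ⋂ (u : V) (v : V), {g : V → ℝ | |g u - g v| ≤ (G.dist u v : ℝ)} := by
        ext g
        simp [IsLip1, Set.mem_iInter]
      rw [this]
      refine isClosed_iInter fun u => isClosed_iInter fun v => ?_
      exact isClosed_le (((continuous_apply u).sub (continuous_apply v)).abs) continuous_const
  · have hsub : {g : V → ℝ | g x = 0 ∧ IsLip1 G g} ⊆ Metric.closedBall 0 D := by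
      rintro g ⟨hgx, hg⟩
      rw [Metric.mem_closedBall, dist_zero_right]
      rw [pi_norm_le_iff_of_nonneg hD0]
      intro v
      rw [Real.norm_eq_abs]
      have h1 := hg v x
      rw [hgx, sub_zero] at h1
      refine h1.trans ?_
      rw [hD]
      exact Finset.single_le_sum (f := fun u => (G.dist u x : ℝ))
        (fun u _ => Nat.cast_nonneg _) (Finset.mem_univ v)
    exact Metric.isBounded_closedBall.subset hsub

/-- The Danskin-type estimate: for `t` small, all Lipschitz functions satisfy a uniform bound. -/
lemma key2 (hconn : G.Connected) (x y : V) (hxy : x ≠ y) {ε : ℝ} (hε : 0 < ε) :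
    ∃ t₀ > 0, ∀ f : V → ℝ, IsLip1 G f → ∀ t : ℝ, 0 < t → t ≤ t₀ →
      (f y - f x) + t * (graphLap G f y - graphLap G f x)
        ≤ (G.dist x y : ℝ) + t * (-(sInf { r : ℝ | ∃ f : V → ℝ, IsLip1 G f ∧
            f y - f x = G.dist x y ∧
            r = (graphLap G f x - graphLap G f y) / G.dist x y } * (G.dist x y : ℝ)) + ε) := by
  have : Nontrivial V := ⟨⟨x, y, hxy⟩⟩
  set d₀ : ℝ := (G.dist x y : ℝ) with hd₀def
  have hd₀ : 0 < d₀ := by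
    rw [hd₀def]
    exact_mod_cast hconn.pos_dist_of_ne hxy
  set R : Set ℝ := { r : ℝ | ∃ f : V → ℝ, IsLip1 G f ∧ f y - f x = G.dist x y ∧
      r = (graphLap G f x - graphLap G f y) / G.dist x y } with hRdef
  set L : ℝ := sInf R with hLdef
  set S : ℝ := -(L * d₀) with hSdef
  have hRne : R.Nonempty := by
    refine ⟨(graphLap G (fun v => (G.dist x v : ℝ)) x
      - graphLap G (fun v => (G.dist x v : ℝ)) y) / d₀, ?_⟩
    exact ⟨fun v => (G.dist x v : ℝ), lip_dist_fun hconn x, by simp, rfl⟩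
  have hRbdd : BddBelow R := by
    refine ⟨-(2 / d₀), ?_⟩
    rintro r ⟨f, hf, _, rfl⟩
    have h1 := abs_graphLap_le hconn hf x
    have h2 := abs_graphLap_le hconn hf y
    rw [abs_le] at h1 h2
    rw [← hd₀def, show -(2/d₀) = (-2)/d₀ by ring]
    exact (div_le_div_iff_of_pos_right hd₀).mpr (by linarith)
  have hSbound : ∀ f : V → ℝ, IsLip1 G f → f y - f x = d₀ →
      graphLap G f y - graphLap G f x ≤ S := by
    intro f hf hfyx
    have hmem : ((graphLap G f x - graphLap G f y) / (G.dist x y : ℝ)) ∈ R :=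
      ⟨f, hf, hfyx, rfl⟩
    have hL : L ≤ (graphLap G f x - graphLap G f y) / d₀ := csInf_le hRbdd hmem
    rw [le_div_iff₀ hd₀] at hL
    rw [hSdef]
    linarith
  set K : Set (V → ℝ) := {g | g x = 0 ∧ IsLip1 G g} with hK
  have hKcpt : IsCompact K := isCompact_K0L x
  set ψf : (V → ℝ) → ℝ := fun g => graphLap G g y - graphLap G g x with hψf
  have hψcont : Continuous ψf := continuous_lapdiff x y
  set Eset : Set (V → ℝ) := K ∩ {g | S + ε ≤ ψf g} with hE
  have hEcpt : IsCompact Eset :=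
    hKcpt.inter_right (isClosed_le continuous_const hψcont)
  -- facts for a normalized g coming from a Lipschitz f
  have hnorm : ∀ f : V → ℝ, IsLip1 G f →
      (fun v => f v - f x) ∈ K ∧
      ψf (fun v => f v - f x) = graphLap G f y - graphLap G f x ∧
      ((fun v => f v - f x) y - (fun v => f v - f x) x = f y - f x) := by
    intro f hf
    refine ⟨⟨by simp, isLip1_sub_const hf (f x)⟩, ?_, by ring⟩
    rw [hψf]
    simp only [graphLap_sub_const]
  rcases Eset.eq_empty_or_nonempty with hEe | hEne
  · refine ⟨1, one_pos, ?_⟩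
    intro f hf t ht ht1
    obtain ⟨hgK, hgψ, hgφ⟩ := hnorm f hf
    have hgnot : (fun v => f v - f x) ∉ Eset := by rw [hEe]; exact Set.notMem_empty _
    have hlt : graphLap G f y - graphLap G f x < S + ε := by
      by_contra hcon
      push_neg at hcon
      exact hgnot ⟨hgK, by rw [Set.mem_setOf_eq, hgψ]; exact hcon⟩
    have hφle : f y - f x ≤ d₀ := lip_le_dist hf x y
    nlinarith [mul_lt_mul_of_pos_left hlt ht]
  · obtain ⟨g₀, hg₀E, hmax⟩ := hEcpt.exists_isMaxOn hEne
      (((continuous_apply y).sub (continuous_apply x)).continuousOn)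
    set c : ℝ := g₀ y - g₀ x with hc
    have hcd : c < d₀ := by
      rcases lt_or_eq_of_le (lip_le_dist hg₀E.1.2 x y) with h | h
      · exact h
      · exfalso
        have h1 := hSbound g₀ hg₀E.1.2 h
        have h2 : S + ε ≤ ψf g₀ := hg₀E.2
        simp only [hψf] at h2
        linarith
    refine ⟨if 2 - (S + ε) ≤ 0 then 1 else (d₀ - c)/(2 - (S+ε)), ?_, ?_⟩
    · split_ifs with h
      · exact one_pos
      · push_neg at h
        exact div_pos (by linarith) (by linarith)
    · intro f hf t ht htt₀
      obtain ⟨hgK, hgψ, hgφ⟩ := hnorm f hf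
      rcases le_or_gt (S + ε) (graphLap G f y - graphLap G f x) with hin | hout
      · have hgE : (fun v => f v - f x) ∈ Eset :=
          ⟨hgK, by rw [Set.mem_setOf_eq, hgψ]; exact hin⟩
        have hφc : f y - f x ≤ c := by
          have := hmax hgE
          simp only [hc] at this ⊢
          calc f y - f x = (fun v => f v - f x) y - (fun v => f v - f x) x := by ring
            _ ≤ g₀ y - g₀ x := this
        have hψ2 : graphLap G f y - graphLap G f x ≤ 2 := by
          have h1 := abs_graphLap_le hconn hf x
          have h2 := abs_graphLap_le hconn hf y
          rw [abs_le] at h1 h2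
          linarith
        split_ifs at htt₀ with hcase
        · -- 2 ≤ S + ε
          have ht2 : t * (graphLap G f y - graphLap G f x) ≤ t * (S + ε) := by
            nlinarith
          linarith
        · push_neg at hcase
          have hkey : t * (2 - (S + ε)) ≤ d₀ - c := by
            rw [← le_div_iff₀ hcase] at *
            · exact htt₀
          have ht2 : t * (graphLap G f y - graphLap G f x) ≤ t * 2 := by nlinarith
          nlinarith
      · have hφle : f y - f x ≤ d₀ := lip_le_dist hf x y
        nlinarith [mul_lt_mul_of_pos_left hout ht]

end Main


theorem kappaAlpha_tendsto_LLY {V : Type*} [Fintype V] [DecidableEq V]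
    (G : SimpleGraph V) [DecidableRel G.Adj] (hconn : G.Connected)
    (x y : V) (hxy : x ≠ y) :
    Filter.Tendsto (fun α : ℝ => kappaAlpha G α x y / (1 - α))
      (nhdsWithin 1 (Set.Ico (0 : ℝ) 1))
      (nhds (sInf { r : ℝ | ∃ f : V → ℝ, IsLip1 G f ∧ f y - f x = G.dist x y ∧
        r = (graphLap G f x - graphLap G f y) / G.dist x y })) := by
  have hnt : Nontrivial V := ⟨⟨x, y, hxy⟩⟩
  set d₀ : ℝ := (G.dist x y : ℝ) with hd₀def
  have hd₀ : 0 < d₀ := by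
    rw [hd₀def]
    exact_mod_cast hconn.pos_dist_of_ne hxy
  have hd₀1 : 1 ≤ d₀ := by
    rw [hd₀def]
    exact_mod_cast hconn.pos_dist_of_ne hxy
  set R : Set ℝ := { r : ℝ | ∃ f : V → ℝ, IsLip1 G f ∧ f y - f x = G.dist x y ∧
      r = (graphLap G f x - graphLap G f y) / G.dist x y } with hRdef
  set L : ℝ := sInf R with hLdef
  set S : ℝ := -(L * d₀) with hSdef
  have hRne : R.Nonempty := by
    refine ⟨(graphLap G (fun v => (G.dist x v : ℝ)) x
      - graphLap G (fun v => (G.dist x v : ℝ)) y) / d₀, ?_⟩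
    exact ⟨fun v => (G.dist x v : ℝ), lip_dist_fun hconn x, by simp, rfl⟩
  have hRbdd : BddBelow R := by
    refine ⟨-(2 / d₀), ?_⟩
    rintro r ⟨f, hf, _, rfl⟩
    have h1 := abs_graphLap_le hconn hf x
    have h2 := abs_graphLap_le hconn hf y
    rw [abs_le] at h1 h2
    rw [← hd₀def, show -(2/d₀) = (-2)/d₀ by ring]
    exact (div_le_div_iff_of_pos_right hd₀).mpr (by linarith)
  rw [Metric.tendsto_nhdsWithin_nhds]
  intro ε hε
  set ε' : ℝ := ε/2 with hε'def
  have hε' : 0 < ε' := by positivity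
  obtain ⟨t₀, ht₀, hkey⟩ := key2 hconn x y hxy hε'
  rw [← hd₀def, ← hRdef, ← hLdef, ← hSdef] at hkey
  refine ⟨t₀, ht₀, ?_⟩
  intro α hα hαdist
  have hα1 : α < 1 := hα.2
  set t : ℝ := 1 - α with htdef
  have ht : 0 < t := by rw [htdef]; linarith
  have htle : t ≤ t₀ := by
    rw [Real.dist_eq] at hαdist
    have : |α - 1| = t := by rw [htdef, abs_sub_comm, abs_of_pos (by linarith : (0:ℝ) < 1 - α)]
    rw [this] at hαdist
    exact hαdist.le
  set m1 : V → ℝ := lazyWalk G α x with hm1def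
  set m2 : V → ℝ := lazyWalk G α y with hm2def
  have hm1 : IsProb m1 := isProb_lazyWalk hconn hα.1 hα1.le x
  have hm2 : IsProb m2 := isProb_lazyWalk hconn hα.1 hα1.le y
  set Wα : ℝ := transportDist G m1 m2 with hWαdef
  -- upper bound for Wα via strong duality + key2
  have hWle : Wα ≤ d₀ + t * (S + ε') := by
    refine le_of_forall_pos_le_add ?_
    intro δ hδ
    obtain ⟨F, hFlip, hFgt⟩ := strong_duality hconn hm1 hm2 hδ
    have hcomp : ∑ v, F v * m2 v - ∑ v, F v * m1 v
        = (F y - F x) + t * (graphLap G F y - graphLap G F x) := by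
      rw [hm1def, hm2def, sum_mul_lazyWalk_eq_lap hconn α y F,
        sum_mul_lazyWalk_eq_lap hconn α x F, htdef]
      ring
    have hk := hkey F hFlip t ht htle
    rw [hcomp] at hFgt
    linarith
  -- lower bound for Wα via weak duality
  have hWge : d₀ + t * (S - ε') ≤ Wα := by
    have hlt : sInf R < L + ε' / d₀ := by
      rw [← hLdef]
      have : 0 < ε' / d₀ := by positivity
      linarith
    obtain ⟨r, hrR, hrlt⟩ := (csInf_lt_iff hRbdd hRne).mp hlt
    obtain ⟨f, hf, hfyx, hreq⟩ := hrR
    have hsum : ∑ v, f v * m2 v - ∑ v, f v * m1 v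
        = (f y - f x) + t * (graphLap G f y - graphLap G f x) := by
      rw [hm1def, hm2def, sum_mul_lazyWalk_eq_lap hconn α y f,
        sum_mul_lazyWalk_eq_lap hconn α x f, htdef]
      ring
    have hfyx' : f y - f x = d₀ := by rw [hd₀def]; exact hfyx
    have hc : ((G.dist x y : ℕ) : ℝ) ≠ 0 := by rw [← hd₀def]; exact hd₀.ne'
    have hΔ : graphLap G f y - graphLap G f x = -(r * d₀) := by
      have h5 : r * d₀ = graphLap G f x - graphLap G f y := by
        rw [hreq, hd₀def]
        field_simp
      linarith
    have hWb := le_transportDist (G := G) hm1 hm2 hf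
    have hrS : S - ε' < -(r * d₀) := by
      rw [hSdef]
      have h6 : r * d₀ < L * d₀ + ε' := by
        have h7 := mul_lt_mul_of_pos_right hrlt hd₀
        rw [add_mul, div_mul_cancel₀ _ (ne_of_gt hd₀)] at h7
        linarith
      linarith
    have ht' : t * (S - ε') ≤ t * (-(r * d₀)) := by nlinarith
    rw [hsum, hfyx', hΔ] at hWb
    rw [← hWαdef] at hWb
    linarith
  -- conclusion
  have hκ : kappaAlpha G α x y = 1 - Wα / d₀ := rfl
  have hup : kappaAlpha G α x y ≤ t * (L + ε' / d₀) := by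
    have h1 : (d₀ + t * (S - ε')) / d₀ ≤ Wα / d₀ :=
      (div_le_div_iff_of_pos_right hd₀).mpr hWge
    have h2 : (d₀ + t * (S - ε')) / d₀ = 1 - t * (L + ε' / d₀) := by
      rw [hSdef]
      field_simp
      ring
    rw [hκ]
    linarith
  have hdown : t * (L - ε' / d₀) ≤ kappaAlpha G α x y := by
    have h1 : Wα / d₀ ≤ (d₀ + t * (S + ε')) / d₀ :=
      (div_le_div_iff_of_pos_right hd₀).mpr hWle
    have h2 : (d₀ + t * (S + ε')) / d₀ = 1 - t * (L - ε' / d₀) := by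
      rw [hSdef]
      field_simp
      ring
    rw [hκ]
    linarith
  have habs : |kappaAlpha G α x y / t - L| ≤ ε' / d₀ := by
    rw [abs_le]
    constructor
    · have : L - ε' / d₀ ≤ kappaAlpha G α x y / t := by
        rw [le_div_iff₀ ht]
        calc (L - ε' / d₀) * t = t * (L - ε' / d₀) := by ring
          _ ≤ kappaAlpha G α x y := hdown
      linarith
    · have : kappaAlpha G α x y / t ≤ L + ε' / d₀ := by
        rw [div_le_iff₀ ht]
        calc kappaAlpha G α x y ≤ t * (L + ε' / d₀) := hup
          _ = (L + ε' / d₀) * t := by ring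
      linarith
  have hεd : ε' / d₀ ≤ ε' := div_le_self hε'.le hd₀1
  rw [Real.dist_eq]
  calc |kappaAlpha G α x y / t - L| ≤ ε' / d₀ := habs
    _ ≤ ε' := hεd
    _ < ε := by rw [hε'def]; linarith
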